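/- Let G be a group and let p, q be relatively prime positive integers such that x^p y^p = y^p x^p and x^q y^q = y^q x^q for all x, y in G. Then G is abelian. -/

import Mathlib

/-- A group in which `p`-th powers commute and `q`-th powers commute, for relatively
prime positive integers `p` and `q`, is abelian. -/
theorem stmt_4 {G : Type*} [Group G]
    (p q : ℕ) (hp : 0 < p) (hq : 0 < q) (hpq : Nat.Coprime p q)
    (h1 : ∀ x y : G, x ^ p * y ^ p = y ^ p * x ^ p)
    (h2 : ∀ x y : G, x ^ q * y ^ q = y ^ q * x ^ q) :
    ∀ x y : G, x * y = y * x := by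
  -- Bezout coefficients
  obtain ⟨α, β, hab⟩ : ∃ a b : ℤ, (p : ℤ) * a + (q : ℤ) * b = 1 := by
    refine ⟨Nat.gcdA p q, Nat.gcdB p q, ?_⟩
    have := Nat.gcd_eq_gcd_ab p q
    have h : Nat.gcd p q = 1 := hpq
    rw [h] at this
    push_cast at this
    linarith
  have h1' : ∀ x y : G, Commute (x ^ p) (y ^ p) := fun x y => h1 x y
  have h2' : ∀ x y : G, Commute (x ^ q) (y ^ q) := fun x y => h2 x y
  -- every element decomposes as a p-th power times a q-th power
  have decomp : ∀ t : G, (t ^ α) ^ p * (t ^ β) ^ q = t := by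
    intro t
    rw [← zpow_natCast (t ^ α) p, ← zpow_natCast (t ^ β) q, ← zpow_mul, ← zpow_mul,
      ← zpow_add]
    rw [show α * (p : ℤ) + β * (q : ℤ) = 1 by linarith]
    exact zpow_one t
  -- pq-th powers are central
  have central : ∀ x t : G, Commute (x ^ (p * q)) t := by
    intro x t
    have hP : Commute (x ^ (p * q)) ((t ^ α) ^ p) := by
      rw [mul_comm p q, pow_mul]; exact h1' (x ^ q) (t ^ α)
    have hQ : Commute (x ^ (p * q)) ((t ^ β) ^ q) := by
      rw [pow_mul]; exact h2' (x ^ p) (t ^ β)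
    have := hP.mul_right hQ
    rwa [decomp t] at this
  -- p-th powers commute with q-th powers
  have key : ∀ x y : G, Commute (x ^ p) (y ^ q) := by
    intro x y
    set a := x ^ p with ha
    set b := y ^ q with hb
    set d := a * b * a⁻¹ * b⁻¹ with hd
    -- d is a product of two p-th powers
    have dP : d = x ^ p * (b * x⁻¹ * b⁻¹) ^ p := by
      rw [conj_pow, inv_pow, hd, ha]; group
    -- d is a product of two q-th powers
    have dQ : d = (a * y * a⁻¹) ^ q * (y⁻¹) ^ q := by
      rw [conj_pow, inv_pow, hd, hb]
    -- d commutes with every p-th power and every q-th power, hence is central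
    have dcen : ∀ t : G, Commute d t := by
      intro t
      have hP : Commute d ((t ^ α) ^ p) := by
        rw [dP]; exact (h1' x (t ^ α)).mul_left (h1' (b * x⁻¹ * b⁻¹) (t ^ α))
      have hQ : Commute d ((t ^ β) ^ q) := by
        rw [dQ]; exact (h2' (a * y * a⁻¹) (t ^ β)).mul_left (h2' y⁻¹ (t ^ β))
      have := hP.mul_right hQ
      rwa [decomp t] at this
    -- basic commutator relation : a * b = d * (b * a)
    have hab' : a * b = d * (b * a) := by rw [hd]; group
    -- a^n * b = d^n * (b * a^n)
    have key1 : ∀ n : ℕ, a ^ n * b = d ^ n * (b * a ^ n) := by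
      intro n
      induction n with
      | zero => simp
      | succ n ih =>
        calc a ^ (n + 1) * b = a ^ n * (a * b) := by rw [pow_succ]; group
          _ = a ^ n * (d * (b * a)) := by rw [hab']
          _ = d * a ^ n * (b * a) := by rw [← mul_assoc, ← (dcen (a ^ n)).eq]
          _ = d * (a ^ n * b) * a := by group
          _ = d * (d ^ n * (b * a ^ n)) * a := by rw [ih]
          _ = d ^ (n + 1) * (b * a ^ (n + 1)) := by rw [pow_succ, pow_succ]; group
    -- a * b^n = d^n * (b^n * a)
    have key2 : ∀ n : ℕ, a * b ^ n = d ^ n * (b ^ n * a) := by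
      intro n
      induction n with
      | zero => simp
      | succ n ih =>
        calc a * b ^ (n + 1) = a * b ^ n * b := by rw [pow_succ]; group
          _ = d ^ n * (b ^ n * a) * b := by rw [ih]
          _ = d ^ n * b ^ n * (a * b) := by group
          _ = d ^ n * b ^ n * (d * (b * a)) := by rw [hab']
          _ = d ^ n * (b ^ n * d) * (b * a) := by group
          _ = d ^ n * (d * b ^ n) * (b * a) := by rw [← (dcen (b ^ n)).eq]
          _ = d ^ (n + 1) * (b ^ (n + 1) * a) := by rw [pow_succ, pow_succ]; group
    -- d^q = 1 since a^q = x^(pq) is central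
    have hdq : d ^ q = 1 := by
      have h := key1 q
      rw [ha, ← pow_mul, (central x b).eq] at h
      exact (right_eq_mul.mp h).symm ▸ rfl
    -- d^p = 1 since b^p = y^(pq) is central
    have hdp : d ^ p = 1 := by
      have h := key2 p
      rw [hb, ← pow_mul, mul_comm q p, ← (central y a).eq] at h
      exact (right_eq_mul.mp h).symm ▸ rfl
    -- hence d = 1 by coprimality
    have hd1 : d = 1 := by
      have : d ^ ((p : ℤ) * α + (q : ℤ) * β) = 1 := by
        rw [zpow_add, zpow_mul, zpow_mul, zpow_natCast, zpow_natCast, hdp, hdq]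
        simp
      rwa [hab, zpow_one] at this
    have : a * b = b * a := by rw [hab', hd1, one_mul]
    exact this
  -- conclude
  intro x y
  have cx : Commute ((x ^ α) ^ p * (x ^ β) ^ q) ((y ^ α) ^ p * (y ^ β) ^ q) := by
    refine Commute.mul_left ?_ ?_
    · exact (h1' (x ^ α) (y ^ α)).mul_right (key (x ^ α) (y ^ β))
    · exact ((key (y ^ α) (x ^ β)).symm).mul_right (h2' (x ^ β) (y ^ β))
  rwa [decomp x, decomp y] at cx
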